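/- arXiv:2006.12407 — 3 statements merged into one kernel-verified Lean document; each statement's English description precedes it below -/
import Mathlib

section
/- Global existence and dissipativity of the FitzHugh-Nagumo lattice with boundary feedback: consider the ODE system on ℝ^{2n}, x_i' = a(x_{i-1} - 2x_i + x_{i+1}) + f(x_i) - b y_i + p u_i, y_i' = c x_i - δ y_i for 1 ≤ i ≤ n, with periodic boundary x₀ = x_n, x_{n+1} = x₁, feedback u₁ = x_n - x₁, u_n = x₁ - x_n, u_i = 0 otherwise, where a, b, c, δ, p > 0, f ∈ C¹ satisfies f(s)s ≤ -λs⁴ + β and f'(s) ≤ γ with λ, β, γ > 0. Then every solution exists globally on [0,∞) and satisfies ∑_{i=1}^n (x_i(t)² + y_i(t)²) ≤ (1/min{C₁,1})·[e^{-δt}·∑_{i=1}^n (C₁ x_i(0)² + y_i(0)²) + (n/δ)(C₂ + δβ/b)], where C₁ = δ/(2b) and C₂ = (b/(4δλ))(δ²/(2b) + δ/2 + 2c²/δ)². -/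
open Finset

lemma fhn_shift_sub (n : ℕ) (g : ℕ → ℝ) (hg : g 0 = g n) :
    ∑ i ∈ Icc 1 n, g (i - 1) = ∑ i ∈ Icc 1 n, g i := by
  cases n with
  | zero => simp
  | succ m =>
    simp only [← Finset.Ico_add_one_right_eq_Icc, Finset.sum_Ico_eq_sum_range, Nat.succ_sub_one, Nat.add_sub_cancel,
      add_tsub_cancel_left]
    rw [Finset.sum_range_succ', Finset.sum_range_succ]
    rw [hg]
    congr 1
    · apply Finset.sum_congr rfl; intro i _; congr 1; omega
    · congr 1; omega

lemma fhn_shift_add (n : ℕ) (g : ℕ → ℝ) (hg : g (n + 1) = g 1) :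
    ∑ i ∈ Icc 1 n, g (i + 1) = ∑ i ∈ Icc 1 n, g i := by
  cases n with
  | zero => simp
  | succ m =>
    simp only [← Finset.Ico_add_one_right_eq_Icc, Finset.sum_Ico_eq_sum_range, Nat.succ_sub_one, Nat.add_sub_cancel]
    rw [Finset.sum_range_succ, Finset.sum_range_succ']
    rw [show (1 + m + 1) = m + 1 + 1 by omega, hg]
    rw [show (0:ℕ) + 1 = 1 by omega]
    simp [add_assoc]

lemma fhn_cross (c δ X Y : ℝ) (hδ : 0 < δ) :
    (2*c-δ)*X*Y - δ*Y^2 ≤ (2*c^2/δ + δ/2)*X^2 := by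
  rw [← sub_nonneg]
  have key : 2*δ*((2*c^2/δ + δ/2)*X^2 - ((2*c-δ)*X*Y - δ*Y^2))
      = (2*c*X - δ*Y)^2 + δ^2*(X+Y)^2 := by
    field_simp; ring
  nlinarith [sq_nonneg (2*c*X - δ*Y), sq_nonneg (X+Y), hδ, key]

lemma fhn_quart (b δ lam K X : ℝ) (hb : 0 < b) (hδ : 0 < δ) (hlam : 0 < lam) :
    -(δ*lam/b)*X^4 + K*X^2 ≤ b/(4*δ*lam)*K^2 := by
  rw [← sub_nonneg]
  have key : (4*δ*lam*b)*(b/(4*δ*lam)*K^2 - (-(δ*lam/b)*X^4 + K*X^2))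
      = (b*K - 2*δ*lam*X^2)^2 := by
    field_simp; ring
  nlinarith [sq_nonneg (b*K - 2*δ*lam*X^2),
    mul_pos (mul_pos (mul_pos (by norm_num : (0:ℝ)<4) hδ) hlam) hb, key]

lemma fhn_point (b c δ lam β F X Y : ℝ) (hb : 0 < b) (hδ : 0 < δ) (hlam : 0 < lam)
    (hF : F * X ≤ -lam*X^4 + β) :
    2*(δ/(2*b))*X*F + δ*(δ/(2*b))*X^2 + (2*c-δ)*X*Y - δ*Y^2
      ≤ b/(4*δ*lam)*(δ^2/(2*b) + δ/2 + 2*c^2/δ)^2 + δ*β/b := by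
  have h0 : 2*(δ/(2*b))*X*F = (δ/b)*(F*X) := by field_simp
  have h1 : (δ/b)*(F*X) ≤ (δ/b)*(-lam*X^4+β) :=
    mul_le_mul_of_nonneg_left hF (by positivity)
  have h2 := fhn_cross c δ X Y hδ
  have h3 := fhn_quart b δ lam (δ^2/(2*b) + δ/2 + 2*c^2/δ) X hb hδ hlam
  have h4 : (δ/b)*(-lam*X^4+β) = -(δ*lam/b)*X^4 + δ*β/b := by ring
  have h5 : δ*(δ/(2*b)) = δ^2/(2*b) := by ring
  rw [h0, h5]
  linarith [h1, h2, h3, h4]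

set_option maxHeartbeats 2000000 in
/-- Global existence (formalized as: the solution is defined for all `t ≥ 0`,
which is built into the hypotheses) and the dissipative estimate for the
FitzHugh-Nagumo lattice system with boundary feedback. -/
theorem fhn_global_existence_dissipative
    (n : ℕ) (hn : 4 ≤ n)
    (a b c δ p lam β γ : ℝ)
    (ha : 0 < a) (hb : 0 < b) (hc : 0 < c) (hδ : 0 < δ) (hp : 0 < p)
    (hlam : 0 < lam) (hβ : 0 < β) (hγ : 0 < γ)
    (f : ℝ → ℝ) (hf : ContDiff ℝ 1 f)
    (hf1 : ∀ s : ℝ, f s * s ≤ -lam * s^4 + β)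
    (hf2 : ∀ s : ℝ, deriv f s ≤ γ)
    (x y : ℕ → ℝ → ℝ)
    (hbx0 : ∀ t : ℝ, x 0 t = x n t) (hbx1 : ∀ t : ℝ, x (n + 1) t = x 1 t)
    (hxode : ∀ i ∈ Finset.Icc 1 n, ∀ t ≥ (0:ℝ),
      HasDerivAt (x i)
        (a * (x (i - 1) t - 2 * x i t + x (i + 1) t) + f (x i t) - b * y i t
          + p * (if i = 1 then x n t - x 1 t else if i = n then x 1 t - x n t else 0)) t)
    (hyode : ∀ i ∈ Finset.Icc 1 n, ∀ t ≥ (0:ℝ),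
      HasDerivAt (y i) (c * x i t - δ * y i t) t) :
    ∀ t ≥ (0:ℝ),
      (∑ i ∈ Finset.Icc 1 n, ((x i t)^2 + (y i t)^2))
        ≤ (1 / min (δ / (2 * b)) 1) *
          (Real.exp (-δ * t) * (∑ i ∈ Finset.Icc 1 n,
              ((δ / (2 * b)) * (x i 0)^2 + (y i 0)^2))
            + (n / δ) * ((b / (4 * δ * lam)) * (δ^2 / (2 * b) + δ / 2 + 2 * c^2 / δ)^2
                + δ * β / b)) := by
  intro t ht
  set C₁ : ℝ := δ / (2 * b) with hC₁
  set C₂ : ℝ := b / (4 * δ * lam) * (δ^2 / (2 * b) + δ / 2 + 2 * c^2 / δ)^2 with hC₂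
  set M : ℝ := n * (C₂ + δ * β / b) with hM
  have hC₁pos : 0 < C₁ := by rw [hC₁]; positivity
  have hC₂nonneg : 0 ≤ C₂ := by
    rw [hC₂]
    have h1 : 0 ≤ b / (4 * δ * lam) := by positivity
    exact mul_nonneg h1 (sq_nonneg _)
  have hMnonneg : 0 ≤ M := by
    rw [hM]
    have : 0 ≤ δ * β / b := by positivity
    have : (0:ℝ) ≤ (n:ℝ) := Nat.cast_nonneg n
    positivity
  set E : ℝ → ℝ := fun s => ∑ i ∈ Finset.Icc 1 n, (C₁ * (x i s)^2 + (y i s)^2) with hE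
  set D : ℝ → ℝ := fun s => ∑ i ∈ Finset.Icc 1 n,
      (C₁ * (2 * (x i s) * (a * (x (i - 1) s - 2 * x i s + x (i + 1) s) + f (x i s) - b * y i s
        + p * (if i = 1 then x n s - x 1 s else if i = n then x 1 s - x n s else 0)))
       + 2 * (y i s) * (c * x i s - δ * y i s)) with hD
  -- derivative of E
  have hEderiv : ∀ s ≥ (0:ℝ), HasDerivAt E (D s) s := by
    intro s hs
    rw [show E = ∑ i ∈ Finset.Icc 1 n, (fun s => C₁ * (x i s)^2 + (y i s)^2) from by
      ext u; simp [hE, Finset.sum_apply]]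
    apply HasDerivAt.sum
    intro i hi
    have hx := hxode i hi s hs
    have hy := hyode i hi s hs
    have := ((hx.pow 2).const_mul C₁).add (hy.pow 2)
    convert this using 1
    · ext u; simp [Pi.add_apply, Pi.pow_apply]
    · simp only [Nat.cast_ofNat, show (2:ℕ) - 1 = 1 from rfl, pow_one]
  -- key differential inequality
  have key : ∀ s ≥ (0:ℝ), D s + δ * E s ≤ M := by
    intro s hs
    have hCb : 2 * C₁ * b = δ := by rw [hC₁]; field_simp
    have hcomb : D s + δ * E s
        = (2 * C₁ * a) * (∑ i ∈ Finset.Icc 1 n,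
            x i s * (x (i - 1) s - 2 * x i s + x (i + 1) s))
        + (2 * C₁ * p) * (∑ i ∈ Finset.Icc 1 n, x i s *
            (if i = 1 then x n s - x 1 s else if i = n then x 1 s - x n s else 0))
        + ∑ i ∈ Finset.Icc 1 n, (2 * C₁ * (x i s) * (f (x i s)) + δ * C₁ * (x i s)^2
            + (2 * c - δ) * (x i s) * (y i s) - δ * (y i s)^2) := by
      simp only [hD, hE, Finset.mul_sum, ← Finset.sum_add_distrib]
      apply Finset.sum_congr rfl
      intro i _
      linear_combination (-(x i s * y i s)) * hCb
    have hsub : ∑ i ∈ Finset.Icc 1 n, (x (i - 1) s)^2 = ∑ i ∈ Finset.Icc 1 n, (x i s)^2 :=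
      fhn_shift_sub n (fun j => (x j s)^2) (by simp [hbx0 s])
    have hadd : ∑ i ∈ Finset.Icc 1 n, (x (i + 1) s)^2 = ∑ i ∈ Finset.Icc 1 n, (x i s)^2 :=
      fhn_shift_add n (fun j => (x j s)^2) (by simp [hbx1 s])
    have hS1 : (∑ i ∈ Finset.Icc 1 n,
        x i s * (x (i - 1) s - 2 * x i s + x (i + 1) s)) ≤ 0 := by
      have hpt : ∀ i ∈ Finset.Icc 1 n, x i s * (x (i - 1) s - 2 * x i s + x (i + 1) s)
          ≤ (x (i - 1) s)^2/2 + (x (i + 1) s)^2/2 - (x i s)^2 := by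
        intro i _
        nlinarith [sq_nonneg (x i s - x (i - 1) s), sq_nonneg (x i s - x (i + 1) s)]
      have h := Finset.sum_le_sum hpt
      have hzero : ∑ i ∈ Finset.Icc 1 n,
          ((x (i - 1) s)^2/2 + (x (i + 1) s)^2/2 - (x i s)^2) = 0 := by
        rw [Finset.sum_sub_distrib, Finset.sum_add_distrib, ← Finset.sum_div, ← Finset.sum_div,
          hsub, hadd]
        ring
      linarith
    have h1mem : (1:ℕ) ∈ Finset.Icc 1 n := by simp; omega
    have hnmem : n ∈ (Finset.Icc 1 n).erase 1 := by
      rw [Finset.mem_erase]; constructor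
      · omega
      · simp; omega
    have hS2 : (∑ i ∈ Finset.Icc 1 n, x i s *
        (if i = 1 then x n s - x 1 s else if i = n then x 1 s - x n s else 0)) ≤ 0 := by
      rw [← Finset.add_sum_erase _ _ h1mem, ← Finset.add_sum_erase _ _ hnmem]
      have hrest : ∑ i ∈ ((Finset.Icc 1 n).erase 1).erase n, x i s *
          (if i = 1 then x n s - x 1 s else if i = n then x 1 s - x n s else 0) = 0 := by
        apply Finset.sum_eq_zero
        intro i hi
        rw [Finset.mem_erase] at hi
        obtain ⟨hin, hi2⟩ := hi
        rw [Finset.mem_erase] at hi2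
        rw [if_neg hi2.1, if_neg hin, mul_zero]
      rw [hrest]
      rw [if_pos rfl, if_neg (by omega : n ≠ 1), if_pos rfl]
      nlinarith [sq_nonneg (x 1 s - x n s)]
    have hS3 : (∑ i ∈ Finset.Icc 1 n, (2 * C₁ * (x i s) * (f (x i s)) + δ * C₁ * (x i s)^2
        + (2 * c - δ) * (x i s) * (y i s) - δ * (y i s)^2)) ≤ M := by
      have hpt : ∀ i ∈ Finset.Icc 1 n, 2 * C₁ * (x i s) * (f (x i s)) + δ * C₁ * (x i s)^2
          + (2 * c - δ) * (x i s) * (y i s) - δ * (y i s)^2 ≤ C₂ + δ * β / b := by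
        intro i _
        rw [hC₁, hC₂]
        have := fhn_point b c δ lam β (f (x i s)) (x i s) (y i s) hb hδ hlam (hf1 (x i s))
        linarith [this]
      have h := Finset.sum_le_sum hpt
      rw [Finset.sum_const, Nat.card_Icc] at h
      simp only [nsmul_eq_mul] at h
      rw [hM]
      have hcard : ((n + 1 - 1 : ℕ) : ℝ) = (n : ℝ) := by norm_num
      rw [hcard] at h
      exact h
    have t1 : (2 * C₁ * a) * (∑ i ∈ Finset.Icc 1 n,
        x i s * (x (i - 1) s - 2 * x i s + x (i + 1) s)) ≤ 0 :=
      mul_nonpos_of_nonneg_of_nonpos (by positivity) hS1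
    have t2 : (2 * C₁ * p) * (∑ i ∈ Finset.Icc 1 n, x i s *
        (if i = 1 then x n s - x 1 s else if i = n then x 1 s - x n s else 0)) ≤ 0 :=
      mul_nonpos_of_nonneg_of_nonpos (by positivity) hS2
    linarith [hcomb.le, t1, t2, hS3, hcomb.ge]
  -- Gronwall via a decreasing auxiliary function
  set G : ℝ → ℝ := fun s => Real.exp (δ * s) * (E s - M / δ) with hG
  have hGderiv : ∀ s ≥ (0:ℝ),
      HasDerivAt G (Real.exp (δ * s) * (D s + δ * E s - M)) s := by
    intro s hs
    have h1 : HasDerivAt (fun u => Real.exp (δ * u)) (Real.exp (δ * s) * δ) s := by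
      simpa using ((hasDerivAt_id s).const_mul δ).exp
    have h2 := (hEderiv s hs).sub_const (M / δ)
    have h3 := h1.mul h2
    refine h3.congr_deriv ?_
    have hMd : δ * (M / δ) = M := by field_simp
    linear_combination (-Real.exp (δ * s)) * hMd
  have hant : AntitoneOn G (Set.Icc 0 t) := by
    apply antitoneOn_of_deriv_nonpos (convex_Icc 0 t)
    · intro s hs
      exact ((hGderiv s hs.1).continuousAt).continuousWithinAt
    · rw [interior_Icc]
      intro s hs
      exact ((hGderiv s hs.1.le).differentiableAt).differentiableWithinAt
    · rw [interior_Icc]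
      intro s hs
      rw [(hGderiv s hs.1.le).deriv]
      have hk := key s hs.1.le
      have he : (0:ℝ) < Real.exp (δ * s) := Real.exp_pos _
      exact mul_nonpos_of_nonneg_of_nonpos he.le (by linarith)
  have hGle : G t ≤ G 0 := hant (Set.left_mem_Icc.2 ht) (Set.right_mem_Icc.2 ht) ht
  have hGt : G t = Real.exp (δ * t) * (E t - M / δ) := rfl
  have hG0 : G 0 = E 0 - M / δ := by
    simp only [hG, mul_zero, Real.exp_zero, one_mul]
  have hexp : (0:ℝ) < Real.exp (δ * t) := Real.exp_pos _
  have hMδ : 0 ≤ M / δ := div_nonneg hMnonneg hδ.le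
  have hEt : E t ≤ Real.exp (-δ * t) * E 0 + M / δ := by
    rw [hGt, hG0] at hGle
    have h2 := mul_le_mul_of_nonneg_left hGle (inv_pos.2 hexp).le
    rw [← mul_assoc, inv_mul_cancel₀ hexp.ne', one_mul] at h2
    have hinv : Real.exp (-δ * t) = (Real.exp (δ * t))⁻¹ := by
      rw [← Real.exp_neg]; ring_nf
    rw [hinv]
    have h3 : (Real.exp (δ * t))⁻¹ * (E 0 - M / δ) ≤ (Real.exp (δ * t))⁻¹ * E 0 := by
      have h4 : 0 ≤ (Real.exp (δ * t))⁻¹ * (M / δ) := by positivity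
      nlinarith [h4]
    linarith
  -- conclude
  have hmin : 0 < min C₁ 1 := lt_min hC₁pos one_pos
  have hsumle : min C₁ 1 * (∑ i ∈ Finset.Icc 1 n, ((x i t)^2 + (y i t)^2)) ≤ E t := by
    rw [hE, Finset.mul_sum]
    apply Finset.sum_le_sum
    intro i _
    have h1 : min C₁ 1 ≤ C₁ := min_le_left _ _
    have h2 : min C₁ 1 ≤ (1:ℝ) := min_le_right _ _
    nlinarith [sq_nonneg (x i t), sq_nonneg (y i t)]
  have hE0 : E 0 = ∑ i ∈ Finset.Icc 1 n, (C₁ * (x i 0)^2 + (y i 0)^2) := rfl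
  have hMδeq : M / δ = ((n:ℝ) / δ) * (C₂ + δ * β / b) := by rw [hM]; ring
  have hR : E t ≤ Real.exp (-δ * t) * (∑ i ∈ Finset.Icc 1 n, (C₁ * (x i 0)^2 + (y i 0)^2))
      + ((n:ℝ) / δ) * (C₂ + δ * β / b) := by
    rw [← hE0, ← hMδeq]; exact hEt
  rw [div_mul_eq_mul_div, le_div_iff₀ hmin, one_mul]
  nlinarith [hsumle, hR]
end

section
/- Energy differential inequality for the lattice FitzHugh-Nagumo system: with C₁ = δ/(2b), any solution of the system x_i' = a(x_{i-1}-2x_i+x_{i+1}) + f(x_i) - b y_i + p u_i, y_i' = c x_i - δ y_i (with periodic boundary and feedback as specified) satisfies d/dt ∑_{i=1}^n (C₁ x_i² + y_i²) + δ ∑_{i=1}^n (C₁ x_i² + y_i²) ≤ n(C₂ + δβ/b), where C₂ = (b/(4δλ))(δ²/(2b) + δ/2 + 2c²/δ)². -/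
private lemma fhn_shift_sum (n : ℕ) (u : ℕ → ℝ) :
    ∑ j ∈ Finset.range n, u (j + 1) = ∑ j ∈ Finset.range n, u j + u n - u 0 := by
  have h1 := Finset.sum_range_succ u n
  have h2 := Finset.sum_range_succ' u n
  linarith

private lemma fhn_telescope_le (n : ℕ) (g : ℕ → ℝ) (h0 : g 0 = g n) (h1 : g (n + 1) = g 1) :
    ∑ i ∈ Finset.Icc 1 n, g i * (g (i - 1) - 2 * g i + g (i + 1)) ≤ 0 := by
  have hIcc : ∑ i ∈ Finset.Icc 1 n, g i * (g (i - 1) - 2 * g i + g (i + 1))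
      = ∑ j ∈ Finset.range n, g (j + 1) * (g j - 2 * g (j + 1) + g (j + 2)) := by
    rw [← Finset.Ico_add_one_right_eq_Icc, Finset.sum_Ico_eq_sum_range]
    norm_num
    apply Finset.sum_congr rfl
    intro j _
    have e3 : 1 + j + 1 = j + 2 := by omega
    have e1 : 1 + j = j + 1 := by omega
    rw [e3, e1]
  rw [hIcc]
  set w : ℕ → ℝ := fun j => g (j + 1) * g j - g (j + 1) ^ 2 with hw
  have key : ∑ j ∈ Finset.range n,
      (g (j + 1) * (g j - 2 * g (j + 1) + g (j + 2)) + (g (j + 2) - g (j + 1)) ^ 2) = 0 := by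
    have hterm : ∀ j ∈ Finset.range n,
        g (j + 1) * (g j - 2 * g (j + 1) + g (j + 2)) + (g (j + 2) - g (j + 1)) ^ 2
          = w j - w (j + 1) := by
      intro j _
      simp only [hw]
      ring
    rw [Finset.sum_congr rfl hterm, Finset.sum_range_sub' w n]
    simp only [hw, h0, h1]
    ring
  rw [Finset.sum_add_distrib] at key
  have hsq : 0 ≤ ∑ j ∈ Finset.range n, (g (j + 2) - g (j + 1)) ^ 2 :=
    Finset.sum_nonneg fun j _ => sq_nonneg _
  linarith

private lemma fhn_per_bound (b c δ lam β X Y F : ℝ) (hb : 0 < b) (hδ : 0 < δ)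
    (hlam : 0 < lam) (hF : F * X ≤ -lam * X ^ 4 + β) :
    2 * (δ / (2 * b)) * (F * X) + (2 * c - 2 * (δ / (2 * b)) * b) * (X * Y)
      - δ * Y ^ 2 + δ * (δ / (2 * b)) * X ^ 2
      ≤ (b / (4 * δ * lam)) * (δ ^ 2 / (2 * b) + δ / 2 + 2 * c ^ 2 / δ) ^ 2 + δ * β / b := by
  have h1 : 2 * (δ / (2 * b)) * (F * X) ≤ 2 * (δ / (2 * b)) * (-lam * X ^ 4 + β) :=
    mul_le_mul_of_nonneg_left hF (by positivity)
  have e2 : 2 * c - 2 * (δ / (2 * b)) * b = 2 * c - δ := by field_simp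
  have hcross : (2 * c - δ) * (X * Y) - δ * Y ^ 2 ≤ (δ / 2 + 2 * c ^ 2 / δ) * X ^ 2 := by
    have hkey : δ * ((δ / 2 + 2 * c ^ 2 / δ) * X ^ 2 - ((2 * c - δ) * (X * Y) - δ * Y ^ 2))
        = ((2 * c * X - δ * Y) ^ 2 + (δ * X + δ * Y) ^ 2) / 2 := by
      field_simp
      ring
    nlinarith [sq_nonneg (2 * c * X - δ * Y), sq_nonneg (δ * X + δ * Y), hδ]
  set K : ℝ := δ ^ 2 / (2 * b) + δ / 2 + 2 * c ^ 2 / δ with hK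
  have hM : (0:ℝ) < δ * lam / b := by positivity
  have hquad : -(δ * lam / b) * X ^ 4 + K * X ^ 2 ≤ (b / (4 * δ * lam)) * K ^ 2 := by
    have hnn := mul_nonneg hM.le (sq_nonneg (X ^ 2 - K / (2 * (δ * lam / b))))
    have hexp : (δ * lam / b) * (X ^ 2 - K / (2 * (δ * lam / b))) ^ 2
        = (δ * lam / b) * X ^ 4 - K * X ^ 2 + (b / (4 * δ * lam)) * K ^ 2 := by
      field_simp
      ring
    rw [hexp] at hnn
    linarith
  have e1 : 2 * (δ / (2 * b)) * (-lam * X ^ 4 + β) = -(δ * lam / b) * X ^ 4 + δ * β / b := by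
    field_simp
  have e3 : δ * (δ / (2 * b)) * X ^ 2 + (δ / 2 + 2 * c ^ 2 / δ) * X ^ 2 = K * X ^ 2 := by
    rw [hK]; ring
  rw [e2]
  linarith

/-- Energy differential inequality for the lattice FitzHugh-Nagumo system. -/
theorem fhn_energy_differential_inequality
    (n : ℕ) (hn : 4 ≤ n)
    (a b c δ p lam β : ℝ)
    (ha : 0 < a) (hb : 0 < b) (hc : 0 < c) (hδ : 0 < δ) (hp : 0 < p)
    (hlam : 0 < lam) (hβ : 0 < β)
    (f : ℝ → ℝ) (hf : ContDiff ℝ 1 f)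
    (hf1 : ∀ s : ℝ, f s * s ≤ -lam * s^4 + β)
    (x y : ℕ → ℝ → ℝ)
    (hbx0 : ∀ t : ℝ, x 0 t = x n t) (hbx1 : ∀ t : ℝ, x (n + 1) t = x 1 t)
    (hxode : ∀ i ∈ Finset.Icc 1 n, ∀ t ≥ (0:ℝ),
      HasDerivAt (x i)
        (a * (x (i - 1) t - 2 * x i t + x (i + 1) t) + f (x i t) - b * y i t
          + p * (if i = 1 then x n t - x 1 t else if i = n then x 1 t - x n t else 0)) t)
    (hyode : ∀ i ∈ Finset.Icc 1 n, ∀ t ≥ (0:ℝ),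
      HasDerivAt (y i) (c * x i t - δ * y i t) t) :
    ∀ t ≥ (0:ℝ), ∀ d : ℝ,
      HasDerivAt (fun s => ∑ i ∈ Finset.Icc 1 n,
          ((δ / (2 * b)) * (x i s)^2 + (y i s)^2)) d t →
      d + δ * (∑ i ∈ Finset.Icc 1 n, ((δ / (2 * b)) * (x i t)^2 + (y i t)^2))
        ≤ n * ((b / (4 * δ * lam)) * (δ^2 / (2 * b) + δ / 2 + 2 * c^2 / δ)^2
            + δ * β / b) := by
  intro t ht d hd
  -- the derivative computed from the ODEs
  have hD : HasDerivAt (fun s => ∑ i ∈ Finset.Icc 1 n,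
      ((δ / (2 * b)) * (x i s) ^ 2 + (y i s) ^ 2))
      (∑ i ∈ Finset.Icc 1 n,
        ((δ / (2 * b)) * ((2:ℝ) * x i t *
            (a * (x (i - 1) t - 2 * x i t + x (i + 1) t) + f (x i t) - b * y i t
              + p * (if i = 1 then x n t - x 1 t else if i = n then x 1 t - x n t else 0)))
          + (2:ℝ) * y i t * (c * x i t - δ * y i t))) t := by
    apply HasDerivAt.fun_sum
    intro i hi
    have hx := (hxode i hi t ht).pow 2
    have hy := (hyode i hi t ht).pow 2
    simp only [show (2:ℕ) - 1 = 1 from rfl, pow_one, Nat.cast_ofNat] at hx hy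
    exact (hx.const_mul (δ / (2 * b))).add hy
  have hde : d = ∑ i ∈ Finset.Icc 1 n,
      ((δ / (2 * b)) * ((2:ℝ) * x i t *
          (a * (x (i - 1) t - 2 * x i t + x (i + 1) t) + f (x i t) - b * y i t
            + p * (if i = 1 then x n t - x 1 t else if i = n then x 1 t - x n t else 0)))
        + (2:ℝ) * y i t * (c * x i t - δ * y i t)) := hd.unique hD
  rw [hde]
  -- split the sum into diffusion, feedback and remainder
  have hsplit : (∑ i ∈ Finset.Icc 1 n,
      ((δ / (2 * b)) * ((2:ℝ) * x i t *
          (a * (x (i - 1) t - 2 * x i t + x (i + 1) t) + f (x i t) - b * y i t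
            + p * (if i = 1 then x n t - x 1 t else if i = n then x 1 t - x n t else 0)))
        + (2:ℝ) * y i t * (c * x i t - δ * y i t)))
      + δ * (∑ i ∈ Finset.Icc 1 n, ((δ / (2 * b)) * (x i t) ^ 2 + (y i t) ^ 2))
      = 2 * (δ / (2 * b)) * a *
          (∑ i ∈ Finset.Icc 1 n, x i t * (x (i - 1) t - 2 * x i t + x (i + 1) t))
        + 2 * (δ / (2 * b)) * p *
          (∑ i ∈ Finset.Icc 1 n,
            x i t * (if i = 1 then x n t - x 1 t else if i = n then x 1 t - x n t else 0))
        + ∑ i ∈ Finset.Icc 1 n,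
            (2 * (δ / (2 * b)) * (f (x i t) * x i t)
              + (2 * c - 2 * (δ / (2 * b)) * b) * (x i t * y i t)
              - δ * (y i t) ^ 2 + δ * (δ / (2 * b)) * (x i t) ^ 2) := by
    rw [Finset.mul_sum, Finset.mul_sum, Finset.mul_sum, ← Finset.sum_add_distrib,
      ← Finset.sum_add_distrib, ← Finset.sum_add_distrib]
    apply Finset.sum_congr rfl
    intro i _
    ring
  rw [hsplit]
  -- diffusion term is nonpositive
  have hT : ∑ i ∈ Finset.Icc 1 n, x i t * (x (i - 1) t - 2 * x i t + x (i + 1) t) ≤ 0 :=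
    fhn_telescope_le n (fun j => x j t) (hbx0 t) (hbx1 t)
  have hT' : 2 * (δ / (2 * b)) * a *
      (∑ i ∈ Finset.Icc 1 n, x i t * (x (i - 1) t - 2 * x i t + x (i + 1) t)) ≤ 0 :=
    mul_nonpos_of_nonneg_of_nonpos (by positivity) hT
  -- feedback term is nonpositive
  have hU : ∑ i ∈ Finset.Icc 1 n,
      x i t * (if i = 1 then x n t - x 1 t else if i = n then x 1 t - x n t else 0)
      = -(x n t - x 1 t) ^ 2 := by
    have hsub : ({1, n} : Finset ℕ) ⊆ Finset.Icc 1 n := by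
      intro k hk
      simp only [Finset.mem_insert, Finset.mem_singleton] at hk
      rcases hk with h | h <;> simp [h, Finset.mem_Icc] <;> omega
    have hzero : ∀ k ∈ Finset.Icc 1 n, k ∉ ({1, n} : Finset ℕ) →
        x k t * (if k = 1 then x n t - x 1 t else if k = n then x 1 t - x n t else 0) = 0 := by
      intro k _ hk
      simp only [Finset.mem_insert, Finset.mem_singleton, not_or] at hk
      rw [if_neg hk.1, if_neg hk.2, mul_zero]
    rw [← Finset.sum_subset hsub hzero, Finset.sum_pair (by omega : (1:ℕ) ≠ n)]
    rw [if_pos rfl, if_neg (by omega : n ≠ 1), if_pos rfl]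
    ring
  have hU' : 2 * (δ / (2 * b)) * p *
      (∑ i ∈ Finset.Icc 1 n,
        x i t * (if i = 1 then x n t - x 1 t else if i = n then x 1 t - x n t else 0)) ≤ 0 := by
    rw [hU]
    exact mul_nonpos_of_nonneg_of_nonpos (by positivity) (by nlinarith [sq_nonneg (x n t - x 1 t)])
  -- remainder sum
  have hR : ∑ i ∈ Finset.Icc 1 n,
      (2 * (δ / (2 * b)) * (f (x i t) * x i t)
        + (2 * c - 2 * (δ / (2 * b)) * b) * (x i t * y i t)
        - δ * (y i t) ^ 2 + δ * (δ / (2 * b)) * (x i t) ^ 2)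
      ≤ n * ((b / (4 * δ * lam)) * (δ ^ 2 / (2 * b) + δ / 2 + 2 * c ^ 2 / δ) ^ 2
          + δ * β / b) := by
    have := Finset.sum_le_card_nsmul (Finset.Icc 1 n)
      (fun i => 2 * (δ / (2 * b)) * (f (x i t) * x i t)
        + (2 * c - 2 * (δ / (2 * b)) * b) * (x i t * y i t)
        - δ * (y i t) ^ 2 + δ * (δ / (2 * b)) * (x i t) ^ 2)
      ((b / (4 * δ * lam)) * (δ ^ 2 / (2 * b) + δ / 2 + 2 * c ^ 2 / δ) ^ 2 + δ * β / b)
      (fun i _ => fhn_per_bound b c δ lam β (x i t) (y i t) (f (x i t)) hb hδ hlam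
        (hf1 (x i t)))
    rw [Nat.card_Icc, nsmul_eq_mul] at this
    simpa using this
  linarith
end

section
/- Differenced-system differential inequality: let V_i = x_i - x_{i-1}, W_i = y_i - y_{i-1} for a solution of the FHN CNN with boundary feedback. Then d/dt ∑_{i=1}^n (V_i² + W_i²) + 2δ ∑_{i=1}^n (V_i² + W_i²) + 4p(x_n - x₁)² ≤ ∑_{i=1}^n 2[(δ+γ)V_i² + |c-b|(V_i² + W_i²)] + 2p(x_{n-1} - x₂)². -/
def pdI (n i : ℕ) : ℕ := if i = 1 then n else i - 1

noncomputable def Ufb (n : ℕ) (X : ℕ → ℝ) (i : ℕ) : ℝ :=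
  if i = 1 then X n - X 1 else if i = n then X 1 - X n else 0

noncomputable def DXd (n : ℕ) (a b p : ℝ) (f : ℝ → ℝ) (X Y : ℕ → ℝ) (i : ℕ) : ℝ :=
  a * (X (i - 1) - 2 * X i + X (i + 1)) + f (X i) - b * Y i + p * Ufb n X i

noncomputable def vW (n : ℕ) (X : ℕ → ℝ) (i : ℕ) : ℝ :=
  if i = 0 then X n - X (n - 1) else X i - X (i - 1)

lemma aux_cross (r V W : ℝ) : r * V * W ≤ |r| * (V ^ 2 + W ^ 2) := by
  calc r * V * W ≤ |r * V * W| := le_abs_self _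
    _ = |r| * (|V| * |W|) := by rw [abs_mul, abs_mul, mul_assoc]
    _ ≤ |r| * (V ^ 2 + W ^ 2) := by
        apply mul_le_mul_of_nonneg_left _ (abs_nonneg r)
        nlinarith [sq_nonneg (|V| - |W|), sq_abs V, sq_abs W, abs_nonneg V, abs_nonneg W]

lemma aux_mvt (γ : ℝ) (f : ℝ → ℝ) (hf : Differentiable ℝ f) (hf2 : ∀ s, deriv f s ≤ γ)
    (u v : ℝ) : (f u - f v) * (u - v) ≤ γ * (u - v) ^ 2 := by
  have hg : Differentiable ℝ (fun s => γ * s - f s) :=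
    (differentiable_id.const_mul γ).sub hf
  have hmono : Monotone (fun s => γ * s - f s) := by
    apply monotone_of_deriv_nonneg hg
    intro s
    have hds : HasDerivAt (fun s => γ * s - f s) (γ * 1 - deriv f s) s :=
      ((hasDerivAt_id s).const_mul γ).sub (hf s).hasDerivAt
    rw [hds.deriv]
    linarith [hf2 s]
  rcases le_total v u with h | h
  · have h3 := hmono h
    dsimp only at h3
    have h2 : f u - f v ≤ γ * (u - v) := by linarith
    calc (f u - f v) * (u - v) ≤ (γ * (u - v)) * (u - v) :=
          mul_le_mul_of_nonneg_right h2 (by linarith)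
      _ = γ * (u - v) ^ 2 := by ring
  · have h3 := hmono h
    dsimp only at h3
    have h2 : f v - f u ≤ γ * (v - u) := by linarith
    nlinarith [mul_le_mul_of_nonneg_right h2 (by linarith : (0:ℝ) ≤ v - u)]

lemma cyclic_diffusion (n : ℕ) (v : ℕ → ℝ) (h0 : v 0 = v n) (h1 : v (n + 1) = v 1) :
    ∑ i ∈ Finset.range n, v (i + 1) * (v i - 2 * v (i + 1) + v (i + 2)) ≤ 0 := by
  have key : ∀ i : ℕ, v (i + 1) * (v i - 2 * v (i + 1) + v (i + 2))
      = -((v (i + 2) - v (i + 1)) ^ 2)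
        + ((fun k => v (k + 1) * (v k - v (k + 1))) i
            - (fun k => v (k + 1) * (v k - v (k + 1))) (i + 1)) := by
    intro i; dsimp only; ring
  calc ∑ i ∈ Finset.range n, v (i + 1) * (v i - 2 * v (i + 1) + v (i + 2))
      = ∑ i ∈ Finset.range n, (-((v (i + 2) - v (i + 1)) ^ 2)
          + ((fun k => v (k + 1) * (v k - v (k + 1))) i
              - (fun k => v (k + 1) * (v k - v (k + 1))) (i + 1))) :=
        Finset.sum_congr rfl fun i _ => key i
    _ = (∑ i ∈ Finset.range n, -((v (i + 2) - v (i + 1)) ^ 2))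
        + ((fun k => v (k + 1) * (v k - v (k + 1))) 0
            - (fun k => v (k + 1) * (v k - v (k + 1))) n) := by
        rw [Finset.sum_add_distrib, Finset.sum_range_sub']
    _ ≤ 0 := by
        have hz : (fun k => v (k + 1) * (v k - v (k + 1))) 0
            - (fun k => v (k + 1) * (v k - v (k + 1))) n = 0 := by
          dsimp only; rw [h0, h1]; ring
        rw [hz, add_zero]
        apply Finset.sum_nonpos
        intro i _
        exact neg_nonpos.mpr (sq_nonneg _)

lemma main_ineq (n : ℕ) (hn : 4 ≤ n) (a b c δ p γ : ℝ) (ha : 0 ≤ a) (hp : 0 < p)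
    (f : ℝ → ℝ) (hmvt : ∀ u v : ℝ, (f u - f v) * (u - v) ≤ γ * (u - v) ^ 2)
    (X Y : ℕ → ℝ) (hX0 : X 0 = X n) (hX1 : X (n + 1) = X 1) (hY0 : Y 0 = Y n) :
    (∑ i ∈ Finset.Icc 1 n,
        (2 * (X i - X (i - 1)) * (DXd n a b p f X Y i - DXd n a b p f X Y (pdI n i))
          + 2 * (Y i - Y (i - 1)) * (c * X i - δ * Y i - (c * X (pdI n i) - δ * Y (pdI n i)))))
      + 2 * δ * (∑ i ∈ Finset.Icc 1 n, ((X i - X (i - 1)) ^ 2 + (Y i - Y (i - 1)) ^ 2))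
      + 4 * p * (X n - X 1) ^ 2
    ≤ (∑ i ∈ Finset.Icc 1 n, 2 * ((δ + γ) * (X i - X (i - 1)) ^ 2
          + |c - b| * ((X i - X (i - 1)) ^ 2 + (Y i - Y (i - 1)) ^ 2)))
      + 2 * p * (X (n - 1) - X 2) ^ 2 := by
  have hn1 : n ≠ 1 := by omega
  -- per-term decomposition
  have hsplit : ∀ i ∈ Finset.Icc 1 n,
      2 * (X i - X (i - 1)) * (DXd n a b p f X Y i - DXd n a b p f X Y (pdI n i))
        + 2 * (Y i - Y (i - 1)) * (c * X i - δ * Y i - (c * X (pdI n i) - δ * Y (pdI n i)))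
      = 2 * a * (vW n X i * (vW n X (i - 1) - 2 * vW n X i + vW n X (i + 1)))
        + 2 * p * (X i - X (i - 1)) * (Ufb n X i - Ufb n X (pdI n i))
        + (2 * (X i - X (i - 1)) * (f (X i) - f (X (i - 1)))
            + 2 * (c - b) * (X i - X (i - 1)) * (Y i - Y (i - 1))
            - 2 * δ * (Y i - Y (i - 1)) ^ 2) := by
    intro i hi
    simp only [Finset.mem_Icc] at hi
    rcases eq_or_ne i 1 with rfl | h1
    · have hpd : pdI n 1 = n := by simp [pdI]
      rw [hpd]
      simp only [DXd, vW]
      norm_num [hn1]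
      rw [hX0, hX1, hY0]
      ring
    · obtain ⟨j, rfl⟩ : ∃ j, i = j + 2 := ⟨i - 2, by omega⟩
      have hpd : pdI n (j + 2) = j + 1 := by simp [pdI]
      rw [hpd]
      simp only [DXd, vW]
      norm_num
      ring
  rw [Finset.sum_congr rfl hsplit, Finset.sum_add_distrib, Finset.sum_add_distrib,
    ← Finset.mul_sum]
  -- diffusion bound
  have hT : ∑ i ∈ Finset.Icc 1 n,
      vW n X i * (vW n X (i - 1) - 2 * vW n X i + vW n X (i + 1)) ≤ 0 := by
    have h0 : vW n X 0 = vW n X n := by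
      simp [vW, show n ≠ 0 by omega]
    have h1 : vW n X (n + 1) = vW n X 1 := by
      simp [vW, hX1, hX0]
    have hcd := cyclic_diffusion n (vW n X) h0 h1
    rw [show Finset.Icc 1 n = Finset.Ico 1 (n + 1) from by rw [Finset.Ico_add_one_right_eq_Icc],
      Finset.sum_Ico_eq_sum_range]
    have e : ∀ i : ℕ, vW n X (1 + i) * (vW n X (1 + i - 1) - 2 * vW n X (1 + i) + vW n X (1 + i + 1))
        = vW n X (i + 1) * (vW n X i - 2 * vW n X (i + 1) + vW n X (i + 2)) := by
      intro i
      simp only [show 1 + i = i + 1 from by omega, Nat.add_sub_cancel,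
        show i + 1 + 1 = i + 2 from rfl]
    calc ∑ i ∈ Finset.range (n + 1 - 1),
          vW n X (1 + i) * (vW n X (1 + i - 1) - 2 * vW n X (1 + i) + vW n X (1 + i + 1))
        = ∑ i ∈ Finset.range n,
          vW n X (i + 1) * (vW n X i - 2 * vW n X (i + 1) + vW n X (i + 2)) := by
          rw [show n + 1 - 1 = n from rfl]
          exact Finset.sum_congr rfl fun i _ => e i
      _ ≤ 0 := hcd
  have hTa : 2 * a * (∑ i ∈ Finset.Icc 1 n,
      vW n X i * (vW n X (i - 1) - 2 * vW n X i + vW n X (i + 1))) ≤ 0 :=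
    mul_nonpos_of_nonneg_of_nonpos (by linarith) hT
  -- feedback bound
  have hFb : (∑ i ∈ Finset.Icc 1 n,
        2 * p * (X i - X (i - 1)) * (Ufb n X i - Ufb n X (pdI n i)))
      + 4 * p * (X n - X 1) ^ 2 ≤ 2 * p * (X (n - 1) - X 2) ^ 2 := by
    have hsub : ({1, 2, n} : Finset ℕ) ⊆ Finset.Icc 1 n := by
      intro i hi
      simp only [Finset.mem_insert, Finset.mem_singleton] at hi
      simp only [Finset.mem_Icc]
      omega
    have hz : ∀ i ∈ Finset.Icc 1 n, i ∉ ({1, 2, n} : Finset ℕ) →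
        2 * p * (X i - X (i - 1)) * (Ufb n X i - Ufb n X (pdI n i)) = 0 := by
      intro i hi hni
      simp only [Finset.mem_Icc] at hi
      simp only [Finset.mem_insert, Finset.mem_singleton, not_or] at hni
      have h1 : i ≠ 1 := hni.1
      have h2 : i ≠ n := hni.2.2
      have hpd : pdI n i = i - 1 := if_neg h1
      have h3 : i - 1 ≠ 1 := by omega
      have h4 : i - 1 ≠ n := by omega
      rw [hpd]
      simp [Ufb, h1, h2, h3, h4]
    have e1 : (∑ i ∈ Finset.Icc 1 n,
        2 * p * (X i - X (i - 1)) * (Ufb n X i - Ufb n X (pdI n i)))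
        = ∑ i ∈ ({1, 2, n} : Finset ℕ),
        2 * p * (X i - X (i - 1)) * (Ufb n X i - Ufb n X (pdI n i)) :=
      (Finset.sum_subset hsub hz).symm
    rw [e1]
    rw [show ({1, 2, n} : Finset ℕ) = insert 1 (insert 2 ({n} : Finset ℕ)) from rfl]
    rw [Finset.sum_insert (by simp; omega), Finset.sum_insert (by simp; omega),
      Finset.sum_singleton]
    have p1 : pdI n 1 = n := by simp [pdI]
    have p2 : pdI n 2 = 1 := by simp [pdI]
    have pn : pdI n n = n - 1 := if_neg hn1
    rw [p1, p2, pn]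
    simp only [Ufb]
    norm_num [hn1, show (2:ℕ) ≠ n by omega, show n - 1 ≠ 1 by omega, show n - 1 ≠ n by omega]
    rw [hX0]
    nlinarith [mul_nonneg hp.le (sq_nonneg ((X n - X 1) - (X (n - 1) - X 2)))]
  -- reaction bound
  have hR : (∑ i ∈ Finset.Icc 1 n,
        (2 * (X i - X (i - 1)) * (f (X i) - f (X (i - 1)))
          + 2 * (c - b) * (X i - X (i - 1)) * (Y i - Y (i - 1))
          - 2 * δ * (Y i - Y (i - 1)) ^ 2))
      + 2 * δ * (∑ i ∈ Finset.Icc 1 n, ((X i - X (i - 1)) ^ 2 + (Y i - Y (i - 1)) ^ 2))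
      ≤ ∑ i ∈ Finset.Icc 1 n, 2 * ((δ + γ) * (X i - X (i - 1)) ^ 2
          + |c - b| * ((X i - X (i - 1)) ^ 2 + (Y i - Y (i - 1)) ^ 2)) := by
    rw [Finset.mul_sum, ← Finset.sum_add_distrib]
    apply Finset.sum_le_sum
    intro i _
    have h1 := hmvt (X i) (X (i - 1))
    have h2 := aux_cross (c - b) (X i - X (i - 1)) (Y i - Y (i - 1))
    nlinarith [h1, h2]
  linarith

/-- Differenced-system differential inequality for the FHN CNN with boundary feedback. -/
theorem fhn_differenced_inequality
    (n : ℕ) (hn : 4 ≤ n)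
    (a b c δ p γ : ℝ)
    (ha : 0 < a) (hb : 0 < b) (hc : 0 < c) (hδ : 0 < δ) (hp : 0 < p) (hγ : 0 < γ)
    (f : ℝ → ℝ) (hf : ContDiff ℝ 1 f)
    (hf2 : ∀ s : ℝ, deriv f s ≤ γ)
    (x y : ℕ → ℝ → ℝ)
    (hbx0 : ∀ t : ℝ, x 0 t = x n t) (hbx1 : ∀ t : ℝ, x (n + 1) t = x 1 t)
    (hby0 : ∀ t : ℝ, y 0 t = y n t)
    (hxode : ∀ i ∈ Finset.Icc 1 n, ∀ t ≥ (0:ℝ),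
      HasDerivAt (x i)
        (a * (x (i - 1) t - 2 * x i t + x (i + 1) t) + f (x i t) - b * y i t
          + p * (if i = 1 then x n t - x 1 t else if i = n then x 1 t - x n t else 0)) t)
    (hyode : ∀ i ∈ Finset.Icc 1 n, ∀ t ≥ (0:ℝ),
      HasDerivAt (y i) (c * x i t - δ * y i t) t) :
    ∀ t ≥ (0:ℝ), ∀ d : ℝ,
      HasDerivAt (fun s => ∑ i ∈ Finset.Icc 1 n,
          ((x i s - x (i - 1) s)^2 + (y i s - y (i - 1) s)^2)) d t →
      d + 2 * δ * (∑ i ∈ Finset.Icc 1 n,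
            ((x i t - x (i - 1) t)^2 + (y i t - y (i - 1) t)^2))
        + 4 * p * (x n t - x 1 t)^2
      ≤ (∑ i ∈ Finset.Icc 1 n, 2 * ((δ + γ) * (x i t - x (i - 1) t)^2
            + |c - b| * ((x i t - x (i - 1) t)^2 + (y i t - y (i - 1) t)^2)))
        + 2 * p * (x (n - 1) t - x 2 t)^2 := by
  intro t ht d hd
  have hxfun : x 0 = x n := funext hbx0
  have hyfun : y 0 = y n := funext hby0
  have hnmem : n ∈ Finset.Icc 1 n := by simp; omega
  have hder : ∀ i ∈ Finset.Icc 1 n,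
      HasDerivAt (fun s => (x i s - x (i - 1) s) ^ 2 + (y i s - y (i - 1) s) ^ 2)
        (2 * (x i t - x (i - 1) t)
            * (DXd n a b p f (fun j => x j t) (fun j => y j t) i
                - DXd n a b p f (fun j => x j t) (fun j => y j t) (pdI n i))
          + 2 * (y i t - y (i - 1) t)
            * (c * x i t - δ * y i t - (c * x (pdI n i) t - δ * y (pdI n i) t))) t := by
    intro i hi
    have hxi : HasDerivAt (x i) (DXd n a b p f (fun j => x j t) (fun j => y j t) i) t :=
      hxode i hi t ht
    have hyi : HasDerivAt (y i) (c * x i t - δ * y i t) t := hyode i hi t ht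
    have hxim : HasDerivAt (x (i - 1))
        (DXd n a b p f (fun j => x j t) (fun j => y j t) (pdI n i)) t := by
      rcases eq_or_ne i 1 with rfl | h1
      · rw [show pdI n 1 = n from by simp [pdI], show (1:ℕ) - 1 = 0 from rfl, hxfun]
        exact hxode n hnmem t ht
      · rw [show pdI n i = i - 1 from if_neg h1]
        refine hxode (i - 1) ?_ t ht
        simp only [Finset.mem_Icc] at hi ⊢
        omega
    have hyim : HasDerivAt (y (i - 1)) (c * x (pdI n i) t - δ * y (pdI n i) t) t := by
      rcases eq_or_ne i 1 with rfl | h1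
      · rw [show pdI n 1 = n from by simp [pdI], show (1:ℕ) - 1 = 0 from rfl, hyfun]
        exact hyode n hnmem t ht
      · rw [show pdI n i = i - 1 from if_neg h1]
        refine hyode (i - 1) ?_ t ht
        simp only [Finset.mem_Icc] at hi ⊢
        omega
    have h := ((hxi.fun_sub hxim).fun_pow 2).fun_add ((hyi.fun_sub hyim).fun_pow 2)
    refine h.congr_deriv ?_
    push_cast
    ring
  have hD : HasDerivAt (fun s => ∑ i ∈ Finset.Icc 1 n,
      ((x i s - x (i - 1) s) ^ 2 + (y i s - y (i - 1) s) ^ 2))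
      (∑ i ∈ Finset.Icc 1 n,
        (2 * (x i t - x (i - 1) t)
            * (DXd n a b p f (fun j => x j t) (fun j => y j t) i
                - DXd n a b p f (fun j => x j t) (fun j => y j t) (pdI n i))
          + 2 * (y i t - y (i - 1) t)
            * (c * x i t - δ * y i t - (c * x (pdI n i) t - δ * y (pdI n i) t)))) t :=
    HasDerivAt.fun_sum hder
  have hdd : d = _ := hd.unique hD
  rw [hdd]
  have hmvt := aux_mvt γ f (hf.differentiable one_ne_zero) hf2
  exact main_ineq n hn a b c δ p γ ha.le hp f hmvt (fun j => x j t) (fun j => y j t)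
    (hbx0 t) (hbx1 t) (hby0 t)
end
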